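/- For every n ≥ 1, the graph XF₅ⁿ is Seidel complement stable: for every vertex v of XF₅ⁿ, the graph (XF₅ⁿ)*v is isomorphic to XF₅ⁿ. -/

import Mathlib

set_option maxHeartbeats 1600000

universe u

def seidelCompl {V : Type u} (G : SimpleGraph V) (v : V) : SimpleGraph V where
  Adj x y := x ≠ y ∧
    Xor' (G.Adj x y)
      ((G.Adj v x ∧ ¬ G.Adj v y ∧ y ≠ v) ∨ (G.Adj v y ∧ ¬ G.Adj v x ∧ x ≠ v))
  symm := ⟨by
    rintro x y ⟨hxy, h⟩
    refine ⟨hxy.symm, ?_⟩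
    have h1 : G.Adj x y ↔ G.Adj y x := G.adj_comm x y
    unfold Xor' at h ⊢
    unfold Xor at h ⊢
    tauto⟩
  loopless := ⟨fun x h => h.1 rfl⟩

def XF5 (n : ℕ) : SimpleGraph (Fin 4 ⊕ Fin (n + 1)) :=
  SimpleGraph.fromRel fun x y =>
    match x, y with
    | Sum.inr i, Sum.inr j => (i : ℕ) + 1 = (j : ℕ)
    | Sum.inl a, Sum.inr i =>
        a = 2 ∨ a = 3 ∨ (a = 0 ∧ (i : ℕ) = 0) ∨ (a = 1 ∧ (i : ℕ) = n)
    | Sum.inl a, Sum.inl b => (a = 0 ∧ b = 3) ∨ (a = 1 ∧ b = 2)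
    | _, _ => False

section helpers
open Sum

lemma fv0 : ((0:Fin 4)).val = 0 := rfl
lemma fv1 : ((1:Fin 4)).val = 1 := rfl
lemma fv2 : ((2:Fin 4)).val = 2 := rfl
lemma fv3 : ((3:Fin 4)).val = 3 := rfl

lemma XF5_adj_ll (n : ℕ) (a b : Fin 4) : (XF5 n).Adj (inl a) (inl b) ↔
    (a.val = 0 ∧ b.val = 3) ∨ (a.val = 1 ∧ b.val = 2) ∨
    (b.val = 0 ∧ a.val = 3) ∨ (b.val = 1 ∧ a.val = 2) := by
  simp only [XF5, SimpleGraph.fromRel_adj, ne_eq, inl.injEq, Fin.ext_iff, fv0, fv1, fv2, fv3]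
  omega

lemma XF5_adj_lr (n : ℕ) (a : Fin 4) (i : Fin (n+1)) : (XF5 n).Adj (inl a) (inr i) ↔
    a.val = 2 ∨ a.val = 3 ∨ (a.val = 0 ∧ i.val = 0) ∨ (a.val = 1 ∧ i.val = n) := by
  simp only [XF5, SimpleGraph.fromRel_adj, ne_eq, reduceCtorEq, Fin.ext_iff, fv0, fv1, fv2, fv3,
    not_false_iff, true_and]
  tauto

lemma XF5_adj_rl (n : ℕ) (a : Fin 4) (i : Fin (n+1)) : (XF5 n).Adj (inr i) (inl a) ↔
    a.val = 2 ∨ a.val = 3 ∨ (a.val = 0 ∧ i.val = 0) ∨ (a.val = 1 ∧ i.val = n) := by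
  rw [(XF5 n).adj_comm, XF5_adj_lr]

lemma XF5_adj_rr (n : ℕ) (i j : Fin (n+1)) : (XF5 n).Adj (inr i) (inr j) ↔
    (i.val + 1 = j.val ∨ j.val + 1 = i.val) := by
  simp only [XF5, SimpleGraph.fromRel_adj, ne_eq, inr.injEq, Fin.ext_iff]
  omega

lemma seidelCompl_adj {V : Type u} (G : SimpleGraph V) (v x y : V) :
    (seidelCompl G v).Adj x y ↔ x ≠ y ∧
      ((G.Adj x y ∧ ¬ ((G.Adj v x ∧ ¬ G.Adj v y ∧ y ≠ v) ∨ (G.Adj v y ∧ ¬ G.Adj v x ∧ x ≠ v))) ∨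
       (((G.Adj v x ∧ ¬ G.Adj v y ∧ y ≠ v) ∨ (G.Adj v y ∧ ¬ G.Adj v x ∧ x ≠ v)) ∧ ¬ G.Adj x y)) :=
  Iff.rfl

def seidelTransfer {V W : Type u} {G : SimpleGraph V} {H : SimpleGraph W}
    (φ : G ≃g H) (v : V) (w : W) (h : φ v = w) :
    seidelCompl G v ≃g seidelCompl H w := by
  subst h
  refine ⟨φ.toEquiv, ?_⟩
  intro x y
  show (seidelCompl H (φ v)).Adj (φ x) (φ y) ↔ (seidelCompl G v).Adj x y
  simp only [seidelCompl, SimpleGraph.Adj, φ.map_adj_iff, ne_eq,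
    EmbeddingLike.apply_eq_iff_eq]

def mf (n : ℕ) : Fin 4 ⊕ Fin (n+1) → Fin 4 ⊕ Fin (n+1)
| .inl a => .inl (if a.val = 0 then 1 else if a.val = 1 then 0 else if a.val = 2 then 3 else 2)
| .inr t => .inr ⟨n - t.val, by omega⟩

lemma mf_inv (n : ℕ) : Function.Involutive (mf n) := by
  rintro (a | t)
  · fin_cases a <;> rfl
  · simp only [mf, inr.injEq]
    exact Fin.ext (by simp; omega)

def mirror (n : ℕ) : XF5 n ≃g XF5 n := by
  refine ⟨(mf_inv n).toPerm, ?_⟩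
  rintro (a | i) (b | j) <;> simp only [Function.Involutive.coe_toPerm]
  · fin_cases a <;> fin_cases b <;>
      simp [XF5, mf, SimpleGraph.fromRel_adj, Fin.ext_iff, -Fin.val_eq_zero_iff] <;> decide
  · fin_cases a <;>
      simp [XF5, mf, SimpleGraph.fromRel_adj, Fin.ext_iff, -Fin.val_eq_zero_iff] <;> omega
  · fin_cases b <;>
      simp [XF5, mf, SimpleGraph.fromRel_adj, Fin.ext_iff, -Fin.val_eq_zero_iff] <;> omega
  · simp [XF5, mf, SimpleGraph.fromRel_adj, Fin.ext_iff, -Fin.val_eq_zero_iff]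
    omega

/-! ### Case v = A -/

def sA (n : ℕ) (hn : 1 ≤ n) : Fin 4 ⊕ Fin (n+1) → Fin 4 ⊕ Fin (n+1)
| .inl a => if a.val = 1 then .inr ⟨1, by omega⟩ else if a.val = 3 then .inr ⟨0, by omega⟩ else .inl a
| .inr i => if h0 : i.val = 0 then .inl ⟨3, by omega⟩ else if h1 : i.val = 1 then .inl ⟨1, by omega⟩
    else .inr ⟨n+2-i.val, by omega⟩

lemma sA_inv (n : ℕ) (hn : 1 ≤ n) : Function.Involutive (sA n hn) := by
  rintro (a | i)
  · fin_cases a <;> simp [sA, fv0, fv1, fv2, fv3]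
  · by_cases h0 : i.val = 0
    · simp [sA, h0, fv0, fv1, fv2, fv3, Fin.ext_iff] <;> omega
    · by_cases h1 : i.val = 1
      · simp [sA, h0, h1, fv0, fv1, fv2, fv3, Fin.ext_iff] <;> omega
      · have e2 : ¬ (n+2-i.val = 0) := by omega
        have e3 : ¬ (n+2-i.val = 1) := by omega
        simp [sA, h0, h1, e2, e3, Fin.ext_iff]
        omega

lemma caseA (n : ℕ) (hn : 1 ≤ n) : Nonempty (seidelCompl (XF5 n) (.inl 0) ≃g XF5 n) := by
  refine ⟨⟨(sA_inv n hn).toPerm, ?_⟩⟩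
  intro x y
  simp only [Function.Involutive.coe_toPerm]
  rcases x with a | i <;> rcases y with b | j
  · fin_cases a <;> fin_cases b <;>
      simp [sA, seidelCompl_adj, XF5_adj_ll, XF5_adj_lr, XF5_adj_rl, XF5_adj_rr,
        fv0, fv1, fv2, fv3, Fin.ext_iff] <;> omega
  · by_cases h0 : j.val = 0 <;> by_cases h1 : j.val = 1 <;> fin_cases a <;>
      simp [sA, h0, h1, seidelCompl_adj, XF5_adj_ll, XF5_adj_lr, XF5_adj_rl, XF5_adj_rr,
        fv0, fv1, fv2, fv3, Fin.ext_iff] <;> omega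
  · by_cases h0 : i.val = 0 <;> by_cases h1 : i.val = 1 <;> fin_cases b <;>
      simp [sA, h0, h1, seidelCompl_adj, XF5_adj_ll, XF5_adj_lr, XF5_adj_rl, XF5_adj_rr,
        fv0, fv1, fv2, fv3, Fin.ext_iff] <;> omega
  · by_cases h0 : i.val = 0 <;> by_cases h1 : i.val = 1 <;> by_cases k0 : j.val = 0 <;>
      by_cases k1 : j.val = 1 <;>
      simp [sA, h0, h1, k0, k1, seidelCompl_adj, XF5_adj_ll, XF5_adj_lr, XF5_adj_rl, XF5_adj_rr,
        fv0, fv1, fv2, fv3, Fin.ext_iff] <;> omega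

/-! ### Case v = C -/

def sC (n : ℕ) : Fin 4 ⊕ Fin (n+1) → Fin 4 ⊕ Fin (n+1)
| .inl a => if a.val = 0 then .inl ⟨3, by omega⟩ else if a.val = 3 then .inl ⟨0, by omega⟩
    else if a.val = 1 then .inr ⟨0, by omega⟩ else .inl a
| .inr i => if h0 : i.val = 0 then .inl ⟨1, by omega⟩ else .inr ⟨n+1-i.val, by omega⟩

lemma sC_inv (n : ℕ) : Function.Involutive (sC n) := by
  rintro (a | i)
  · fin_cases a <;> simp [sC, fv0, fv1, fv2, fv3]
  · by_cases h0 : i.val = 0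
    · simp [sC, h0, fv0, fv1, fv2, fv3, Fin.ext_iff] <;> omega
    · have e2 : ¬ (n+1-i.val = 0) := by omega
      simp [sC, h0, e2, Fin.ext_iff]
      omega

lemma caseC (n : ℕ) (hn : 1 ≤ n) : Nonempty (seidelCompl (XF5 n) (.inl 2) ≃g XF5 n) := by
  refine ⟨⟨(sC_inv n).toPerm, ?_⟩⟩
  intro x y
  simp only [Function.Involutive.coe_toPerm]
  rcases x with a | i <;> rcases y with b | j
  · fin_cases a <;> fin_cases b <;>
      simp [sC, seidelCompl_adj, XF5_adj_ll, XF5_adj_lr, XF5_adj_rl, XF5_adj_rr,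
        fv0, fv1, fv2, fv3, Fin.ext_iff] <;> omega
  · by_cases h0 : j.val = 0 <;> fin_cases a <;>
      simp [sC, h0, seidelCompl_adj, XF5_adj_ll, XF5_adj_lr, XF5_adj_rl, XF5_adj_rr,
        fv0, fv1, fv2, fv3, Fin.ext_iff] <;> omega
  · by_cases h0 : i.val = 0 <;> fin_cases b <;>
      simp [sC, h0, seidelCompl_adj, XF5_adj_ll, XF5_adj_lr, XF5_adj_rl, XF5_adj_rr,
        fv0, fv1, fv2, fv3, Fin.ext_iff] <;> omega
  · by_cases h0 : i.val = 0 <;> by_cases k0 : j.val = 0 <;>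
      simp [sC, h0, k0, seidelCompl_adj, XF5_adj_ll, XF5_adj_lr, XF5_adj_rl, XF5_adj_rr,
        fv0, fv1, fv2, fv3, Fin.ext_iff] <;> omega

/-! ### Case v = p₁ -/

def sP1 (n : ℕ) (hn : 1 ≤ n) : Fin 4 ⊕ Fin (n+1) → Fin 4 ⊕ Fin (n+1)
| .inl a => if a.val = 0 then .inl ⟨2, by omega⟩ else if a.val = 2 then .inl ⟨0, by omega⟩
    else if a.val = 3 then .inr ⟨1, by omega⟩
    else if h : n = 1 then .inl a else .inr ⟨2, by omega⟩
| .inr i => if h0 : i.val = 0 then .inr ⟨0, by omega⟩ else if h1 : i.val = 1 then .inl ⟨3, by omega⟩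
    else if h2 : i.val = 2 then .inl ⟨1, by omega⟩ else .inr ⟨n+3-i.val, by omega⟩

lemma sP1_inv (n : ℕ) (hn : 1 ≤ n) : Function.Involutive (sP1 n hn) := by
  rintro (a | i)
  · by_cases h : n = 1 <;> fin_cases a <;> simp [sP1, h, fv0, fv1, fv2, fv3]
  · by_cases h0 : i.val = 0
    · simp [sP1, h0, fv0, fv1, fv2, fv3, Fin.ext_iff]
    · by_cases h1 : i.val = 1
      · simp [sP1, h0, h1, fv0, fv1, fv2, fv3, Fin.ext_iff]
      · by_cases h2 : i.val = 2
        · have hn2 : ¬ n = 1 := by omega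
          simp [sP1, h0, h1, h2, hn2, fv0, fv1, fv2, fv3, Fin.ext_iff]
        · have e0 : ¬ (n+3-i.val = 0) := by omega
          have e1 : ¬ (n+3-i.val = 1) := by omega
          have e2 : ¬ (n+3-i.val = 2) := by omega
          simp [sP1, h0, h1, h2, e0, e1, e2, Fin.ext_iff]
          omega

lemma caseP1 (n : ℕ) (hn : 1 ≤ n) :
    Nonempty (seidelCompl (XF5 n) (.inr ⟨0, Nat.succ_pos n⟩) ≃g XF5 n) := by
  refine ⟨⟨(sP1_inv n hn).toPerm, ?_⟩⟩
  intro x y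
  simp only [Function.Involutive.coe_toPerm]
  rcases x with a | i <;> rcases y with b | j
  · by_cases h : n = 1 <;> fin_cases a <;> fin_cases b <;>
      simp [sP1, h, seidelCompl_adj, XF5_adj_ll, XF5_adj_lr, XF5_adj_rl, XF5_adj_rr,
        fv0, fv1, fv2, fv3, Fin.ext_iff] <;> omega
  · by_cases h : n = 1 <;> by_cases h0 : j.val = 0 <;> by_cases h1 : j.val = 1 <;>
      by_cases h2 : j.val = 2 <;> fin_cases a <;>
      simp [sP1, h, h0, h1, h2, seidelCompl_adj, XF5_adj_ll, XF5_adj_lr, XF5_adj_rl, XF5_adj_rr,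
        fv0, fv1, fv2, fv3, Fin.ext_iff] <;> omega
  · by_cases h : n = 1 <;> by_cases h0 : i.val = 0 <;> by_cases h1 : i.val = 1 <;>
      by_cases h2 : i.val = 2 <;> fin_cases b <;>
      simp [sP1, h, h0, h1, h2, seidelCompl_adj, XF5_adj_ll, XF5_adj_lr, XF5_adj_rl, XF5_adj_rr,
        fv0, fv1, fv2, fv3, Fin.ext_iff] <;> omega
  · by_cases h0 : i.val = 0 <;> by_cases h1 : i.val = 1 <;> by_cases h2 : i.val = 2 <;>
      by_cases k0 : j.val = 0 <;> by_cases k1 : j.val = 1 <;> by_cases k2 : j.val = 2 <;>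
      simp [sP1, h0, h1, h2, k0, k1, k2, seidelCompl_adj, XF5_adj_ll, XF5_adj_lr, XF5_adj_rl,
        XF5_adj_rr, fv0, fv1, fv2, fv3, Fin.ext_iff] <;> omega

end helpers

/-! ### Case v = pᵢ interior -/

section interior
open Sum

def sInt (n c : ℕ) (hc1 : 1 ≤ c) (hc2 : c+1 ≤ n) : Fin 4 ⊕ Fin (n+1) → Fin 4 ⊕ Fin (n+1)
| .inl a =>
    if a.val = 0 then (if c = 1 then .inl a else .inr ⟨c-2, by omega⟩)
    else if a.val = 1 then (if h : c+2 ≤ n then .inr ⟨c+2, by omega⟩ else .inl a)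
    else if a.val = 2 then .inr ⟨c-1, by omega⟩
    else .inr ⟨c+1, by omega⟩
| .inr t =>
    if h1 : t.val + 1 = c then .inl ⟨2, by omega⟩
    else if h2 : t.val = c + 1 then .inl ⟨3, by omega⟩
    else if h3 : t.val = c then .inr ⟨c, by omega⟩
    else if h4 : t.val + 2 = c then .inl ⟨0, by omega⟩
    else if h5 : t.val = c + 2 then .inl ⟨1, by omega⟩
    else if h6 : t.val + 3 ≤ c then .inr ⟨c-3-t.val, by omega⟩
    else .inr ⟨n+3+c-t.val, by omega⟩

lemma sInt_inv (n c : ℕ) (hc1 : 1 ≤ c) (hc2 : c+1 ≤ n) :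
    Function.Involutive (sInt n c hc1 hc2) := by
  rintro (a | t)
  · fin_cases a <;>
      simp [sInt, fv0, fv1, fv2, fv3] <;>
      (try split_ifs) <;>
      (try simp [sInt, fv0, fv1, fv2, fv3, Fin.ext_iff]) <;>
      (try split_ifs) <;>
      (try simp [Fin.ext_iff]) <;>
      (try omega)
  · simp only [sInt]
    split_ifs <;>
      simp [sInt, fv0, fv1, fv2, fv3, Fin.ext_iff] <;>
      (try split_ifs) <;>
      (try simp [Fin.ext_iff]) <;>
      (try omega)

lemma caseInt (n c : ℕ) (hc1 : 1 ≤ c) (hc2 : c+1 ≤ n) :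
    Nonempty (seidelCompl (XF5 n) (.inr ⟨c, by omega⟩) ≃g XF5 n) := by
  refine ⟨⟨(sInt_inv n c hc1 hc2).toPerm, ?_⟩⟩
  intro x y
  simp only [Function.Involutive.coe_toPerm]
  rcases x with a | i <;> rcases y with b | j <;>
    [(fin_cases a <;> fin_cases b); fin_cases a; fin_cases b; skip] <;>
    simp [sInt, fv0, fv1, fv2, fv3] <;>
    (try split_ifs) <;>
    (try simp [seidelCompl_adj, XF5_adj_ll, XF5_adj_lr, XF5_adj_rl, XF5_adj_rr,
      fv0, fv1, fv2, fv3, Fin.ext_iff, -Fin.val_eq_zero_iff]) <;>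
    (try omega)

end interior

/-- For every `n ≥ 1` the graph `XF₅ⁿ` is Seidel complement stable:
`(XF₅ⁿ)*v ≅ XF₅ⁿ` for every vertex `v`. -/
theorem xf5_seidel_stable (n : ℕ) (hn : 1 ≤ n) (v : Fin 4 ⊕ Fin (n + 1)) :
    Nonempty (seidelCompl (XF5 n) v ≃g XF5 n) := by
  obtain ⟨eA⟩ := caseA n hn
  obtain ⟨eC⟩ := caseC n hn
  rcases v with a | t
  · fin_cases a
    · exact ⟨eA⟩
    · exact ⟨(seidelTransfer (mirror n) (.inl 0) (.inl 1) rfl).symm.trans eA⟩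
    · exact ⟨eC⟩
    · exact ⟨(seidelTransfer (mirror n) (.inl 2) (.inl 3) rfl).symm.trans eC⟩
  · by_cases h0 : t.val = 0
    · obtain ⟨e⟩ := caseP1 n hn
      have ht : t = ⟨0, Nat.succ_pos n⟩ := Fin.ext h0
      rw [ht]
      exact ⟨e⟩
    · by_cases hn' : t.val = n
      · obtain ⟨e⟩ := caseP1 n hn
        have ht : t = ⟨n, Nat.lt_succ_self n⟩ := Fin.ext hn'
        rw [ht]
        exact ⟨(seidelTransfer (mirror n) (.inr ⟨0, Nat.succ_pos n⟩) (.inr ⟨n, Nat.lt_succ_self n⟩)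
          rfl).symm.trans e⟩
      · obtain ⟨e⟩ := caseInt n t.val (by omega) (by omega)
        exact ⟨e⟩
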